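/- Let α, β, γ be real numbers with 0 ≤ γ < β < α, and let L_{α,β,γ}(x) = (cosh(αx) − cosh(γx))/(cosh(βx) − cosh(γx)) for x > 0. Then L_{α,β,γ} is strictly increasing on (0,+∞). -/

import Mathlib

open Real Set

/-- The function `L_{α,β,γ}` defined on `(0,+∞)`. -/
noncomputable def L (α β γ : ℝ) (x : ℝ) : ℝ :=
  (Real.cosh (α * x) - Real.cosh (γ * x)) / (Real.cosh (β * x) - Real.cosh (γ * x))

lemma sinh_lt_mul_cosh {t : ℝ} (ht : 0 < t) : Real.sinh t < t * Real.cosh t := by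
  have hmono : StrictMonoOn (fun s : ℝ => s * Real.cosh s - Real.sinh s) (Ici 0) := by
    refine strictMonoOn_of_deriv_pos (convex_Ici 0)
      (((continuous_id.mul Real.continuous_cosh).sub Real.continuous_sinh).continuousOn)
      fun s hs => ?_
    rw [interior_Ici, mem_Ioi] at hs
    have h1 : HasDerivAt (fun s : ℝ => s * Real.cosh s - Real.sinh s)
        (1 * Real.cosh s + s * Real.sinh s - Real.cosh s) s :=
      ((hasDerivAt_id s).mul (Real.hasDerivAt_cosh s)).sub (Real.hasDerivAt_sinh s)
    rw [h1.deriv]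
    have := Real.sinh_pos_iff.2 hs
    nlinarith
  have h := hmono self_mem_Ici (le_of_lt ht) ht
  simpa using h

/-- `sinh s / s` is strictly increasing on `(0,∞)`. -/
lemma sinh_div_self_strictMonoOn : StrictMonoOn (fun s : ℝ => Real.sinh s / s) (Ioi 0) := by
  refine strictMonoOn_of_deriv_pos (convex_Ioi 0)
    (ContinuousOn.div Real.continuous_sinh.continuousOn continuousOn_id
      fun s hs => ne_of_gt hs) fun s hs => ?_
  rw [interior_Ioi, mem_Ioi] at hs
  have h1 : HasDerivAt (fun s : ℝ => Real.sinh s / s)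
      ((Real.cosh s * s - Real.sinh s * 1) / s ^ 2) s :=
    (Real.hasDerivAt_sinh s).div (hasDerivAt_id s) (ne_of_gt hs)
  rw [h1.deriv]
  have h2 := sinh_lt_mul_cosh hs
  have h3 : (0:ℝ) < s ^ 2 := by positivity
  have h4 : Real.cosh s * s - Real.sinh s * 1 > 0 := by nlinarith
  positivity

/-- Key inequality: the numerator of the derivative of `sinh (p x) / sinh (q x)`. -/
lemma deriv_num_pos {p q x : ℝ} (hq : 0 < q) (hpq : q < p) (hx : 0 < x) :
    0 < p * Real.cosh (p * x) * Real.sinh (q * x)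
        - q * Real.sinh (p * x) * Real.cosh (q * x) := by
  have hid : p * Real.cosh (p * x) * Real.sinh (q * x)
        - q * Real.sinh (p * x) * Real.cosh (q * x)
      = ((p - q) * Real.sinh ((p + q) * x) - (p + q) * Real.sinh ((p - q) * x)) / 2 := by
    have e1 : (p + q) * x = p * x + q * x := by ring
    have e2 : (p - q) * x = p * x - q * x := by ring
    rw [e1, e2, Real.sinh_add, Real.sinh_sub]
    ring
  rw [hid]
  have hu : (0:ℝ) < (p - q) * x := mul_pos (by linarith) hx
  have hv : (0:ℝ) < (p + q) * x := mul_pos (by linarith) hx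
  have huv : (p - q) * x < (p + q) * x := by nlinarith
  have hkey := sinh_div_self_strictMonoOn (mem_Ioi.2 hu) (mem_Ioi.2 hv) huv
  simp only at hkey
  rw [div_lt_div_iff₀ hu hv] at hkey
  nlinarith

/-- `sinh (p x) / sinh (q x)` is strictly increasing on `(0,∞)` for `0 < q < p`. -/
lemma sinh_ratio_strictMonoOn {p q : ℝ} (hq : 0 < q) (hpq : q < p) :
    StrictMonoOn (fun x : ℝ => Real.sinh (p * x) / Real.sinh (q * x)) (Ioi 0) := by
  refine strictMonoOn_of_deriv_pos (convex_Ioi 0)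
    (ContinuousOn.div (Real.continuous_sinh.comp (continuous_const.mul continuous_id)).continuousOn
      (Real.continuous_sinh.comp (continuous_const.mul continuous_id)).continuousOn
      fun x hx => ?_) fun x hx => ?_
  · exact ne_of_gt (Real.sinh_pos_iff.2 (mul_pos hq hx))
  · rw [interior_Ioi, mem_Ioi] at hx
    have hsq : (0:ℝ) < Real.sinh (q * x) := Real.sinh_pos_iff.2 (by positivity)
    have hp' : HasDerivAt (fun x : ℝ => Real.sinh (p * x)) (Real.cosh (p * x) * p) x := by
      simpa [Function.comp_def] using (Real.hasDerivAt_sinh (p * x)).comp x ((hasDerivAt_id x).const_mul p)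
    have hq' : HasDerivAt (fun x : ℝ => Real.sinh (q * x)) (Real.cosh (q * x) * q) x := by
      simpa [Function.comp_def] using (Real.hasDerivAt_sinh (q * x)).comp x ((hasDerivAt_id x).const_mul q)
    have h1 := hp'.div hq' (ne_of_gt hsq)
    rw [show (fun x : ℝ => Real.sinh (p * x) / Real.sinh (q * x)) = (fun x : ℝ => Real.sinh (p * x)) / (fun x : ℝ => Real.sinh (q * x)) from rfl, h1.deriv]
    have h2 := deriv_num_pos hq hpq hx
    have h3 : Real.cosh (p * x) * p * Real.sinh (q * x)
        - Real.sinh (p * x) * (Real.cosh (q * x) * q)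
        = p * Real.cosh (p * x) * Real.sinh (q * x)
          - q * Real.sinh (p * x) * Real.cosh (q * x) := by ring
    rw [h3]
    positivity

lemma cosh_sub_cosh' (a b : ℝ) :
    Real.cosh a - Real.cosh b = 2 * Real.sinh ((a + b) / 2) * Real.sinh ((a - b) / 2) := by
  have e1 : a = (a + b) / 2 + (a - b) / 2 := by ring
  have e2 : b = (a + b) / 2 - (a - b) / 2 := by ring
  rw [e1, e2] at *
  rw [Real.cosh_add, Real.cosh_sub]
  ring

/-- If `0 ≤ γ < β < α` then `L_{α,β,γ}` is strictly increasing on `(0,+∞)`. -/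
theorem L_strictMonoOn (α β γ : ℝ) (hγ : 0 ≤ γ) (hγβ : γ < β) (hβα : β < α) :
    StrictMonoOn (L α β γ) (Set.Ioi 0) := by
  set p₁ := (α + γ) / 2 with hp₁
  set q₁ := (β + γ) / 2 with hq₁
  set p₂ := (α - γ) / 2 with hp₂
  set q₂ := (β - γ) / 2 with hq₂
  have hq₁0 : 0 < q₁ := by simp only [hq₁]; linarith
  have hq₂0 : 0 < q₂ := by simp only [hq₂]; linarith
  have hpq₁ : q₁ < p₁ := by simp only [hp₁, hq₁]; linarith
  have hpq₂ : q₂ < p₂ := by simp only [hp₂, hq₂]; linarith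
  have hL : ∀ x ∈ Ioi (0:ℝ), L α β γ x
      = (Real.sinh (p₁ * x) / Real.sinh (q₁ * x))
        * (Real.sinh (p₂ * x) / Real.sinh (q₂ * x)) := by
    intro x hx
    rw [mem_Ioi] at hx
    have hnum : Real.cosh (α * x) - Real.cosh (γ * x)
        = 2 * Real.sinh (p₁ * x) * Real.sinh (p₂ * x) := by
      rw [cosh_sub_cosh' (α * x) (γ * x)]
      have e1 : (α * x + γ * x) / 2 = p₁ * x := by rw [hp₁]; ring
      have e2 : (α * x - γ * x) / 2 = p₂ * x := by rw [hp₂]; ring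
      rw [e1, e2]
    have hden : Real.cosh (β * x) - Real.cosh (γ * x)
        = 2 * Real.sinh (q₁ * x) * Real.sinh (q₂ * x) := by
      rw [cosh_sub_cosh' (β * x) (γ * x)]
      have e1 : (β * x + γ * x) / 2 = q₁ * x := by rw [hq₁]; ring
      have e2 : (β * x - γ * x) / 2 = q₂ * x := by rw [hq₂]; ring
      rw [e1, e2]
    have hs₁ : Real.sinh (q₁ * x) ≠ 0 := ne_of_gt (Real.sinh_pos_iff.2 (by positivity))
    have hs₂ : Real.sinh (q₂ * x) ≠ 0 := ne_of_gt (Real.sinh_pos_iff.2 (by positivity))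
    rw [L, hnum, hden]
    field_simp
  intro x hx y hy hxy
  rw [hL x hx, hL y hy]
  have hm₁ := sinh_ratio_strictMonoOn hq₁0 hpq₁ hx hy hxy
  have hm₂ := sinh_ratio_strictMonoOn hq₂0 hpq₂ hx hy hxy
  simp only at hm₁ hm₂
  have hx' := mem_Ioi.1 hx
  have hy' := mem_Ioi.1 hy
  have hpos₁ : 0 < Real.sinh (p₁ * x) / Real.sinh (q₁ * x) :=
    div_pos (Real.sinh_pos_iff.2 (mul_pos (by linarith) hx'))
      (Real.sinh_pos_iff.2 (mul_pos hq₁0 hx'))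
  have hpos₂ : 0 < Real.sinh (p₂ * x) / Real.sinh (q₂ * x) :=
    div_pos (Real.sinh_pos_iff.2 (mul_pos (by linarith) hx'))
      (Real.sinh_pos_iff.2 (mul_pos hq₂0 hx'))
  calc (Real.sinh (p₁ * x) / Real.sinh (q₁ * x)) * (Real.sinh (p₂ * x) / Real.sinh (q₂ * x))
      < (Real.sinh (p₁ * y) / Real.sinh (q₁ * y)) * (Real.sinh (p₂ * x) / Real.sinh (q₂ * x)) :=
        by exact mul_lt_mul_of_pos_right hm₁ hpos₂
    _ < (Real.sinh (p₁ * y) / Real.sinh (q₁ * y)) * (Real.sinh (p₂ * y) / Real.sinh (q₂ * y)) :=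
        by exact mul_lt_mul_of_pos_left hm₂ (lt_trans hpos₁ hm₁)
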